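/- With ψ_r as above (ψ_r(e_p∧e_q) = Σ_{h=p}^{q-1} t^{r-h-1}u^{h-1} g_{p+q-1-h}), the map ψ_r is surjective at every point of P¹; concretely, for every (t_0 : u_0) ∈ P¹, the vectors ψ_r(e_1∧e_2),...,ψ_r(e_1∧e_r) evaluated at (t_0,u_0) span K^{r-1} whenever t_0 ≠ 0, and the vectors ψ_r(e_1∧e_r),...,ψ_r(e_{r-1}∧e_r) evaluated at (t_0,u_0) span K^{r-1} whenever u_0 ≠ 0. -/
import Mathlib


open Finset

lemma tri_span {K : Type*} [Field K] {n : ℕ} (v : Fin n → Fin n → K)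
    (hd : ∀ i, v i i ≠ 0) (ht : ∀ i j, i < j → v i j = 0) :
    Submodule.span K (Set.range v) = ⊤ := by
  have key : ∀ m : ℕ, ∀ j : Fin n, (j : ℕ) = m →
      (Pi.single j 1 : Fin n → K) ∈ Submodule.span K (Set.range v) := by
    intro m
    induction m using Nat.strong_induction_on with
    | _ m ih =>
      intro j hj
      have hv : v j = ∑ i : Fin n, v j i • (Pi.single i 1 : Fin n → K) := by
        funext x
        simp [Pi.single_apply, eq_comm]
      have hsplit : v j = (∑ i ∈ Finset.univ.filter (· < j), v j i • (Pi.single i 1 : Fin n → K))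
          + v j j • (Pi.single j 1 : Fin n → K) := by
        conv_lhs => rw [hv]
        rw [← Finset.sum_filter_add_sum_filter_not Finset.univ (· < j)]
        congr 1
        apply Finset.sum_eq_single j
        · intro i hi hne
          have hi' : ¬ i < j := (Finset.mem_filter.mp hi).2
          have : j < i := lt_of_le_of_ne (not_lt.mp hi') (Ne.symm hne)
          rw [ht j i this, zero_smul]
        · intro h
          exact absurd (Finset.mem_filter.mpr ⟨Finset.mem_univ j, lt_irrefl j⟩) h
      have hsum : (∑ i ∈ Finset.univ.filter (· < j), v j i • (Pi.single i 1 : Fin n → K))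
          ∈ Submodule.span K (Set.range v) := by
        apply Submodule.sum_mem
        intro i hi
        have hi' : i < j := (Finset.mem_filter.mp hi).2
        exact Submodule.smul_mem _ _ (ih (i : ℕ) (by have h1 : (i : ℕ) < (j : ℕ) := hi'; omega) i rfl)
      have hvj : v j ∈ Submodule.span K (Set.range v) := Submodule.subset_span ⟨j, rfl⟩
      have h2 : v j j • (Pi.single j 1 : Fin n → K)
          = v j - ∑ i ∈ Finset.univ.filter (· < j), v j i • (Pi.single i 1 : Fin n → K) :=
        eq_sub_iff_add_eq'.mpr hsplit.symm
      have : (Pi.single j 1 : Fin n → K) = (v j j)⁻¹ •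
          (v j - ∑ i ∈ Finset.univ.filter (· < j), v j i • (Pi.single i 1 : Fin n → K)) := by
        rw [← h2, smul_smul, inv_mul_cancel₀ (hd j), one_smul]
      rw [this]
      exact Submodule.smul_mem _ _ (Submodule.sub_mem _ hvj hsum)
  rw [eq_top_iff]
  intro x _
  have hx : x = ∑ i : Fin n, x i • (Pi.single i 1 : Fin n → K) := by
    funext k
    simp [Pi.single_apply, eq_comm]
  rw [hx]
  exact Submodule.sum_mem _ fun i _ => Submodule.smul_mem _ _ (key i i rfl)

lemma tri_span' {K : Type*} [Field K] {n : ℕ} (v : Fin n → Fin n → K)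
    (hd : ∀ i, v i i ≠ 0) (ht : ∀ i j, j < i → v i j = 0) :
    Submodule.span K (Set.range v) = ⊤ := by
  set w : Fin n → Fin n → K := fun i j => v i.rev j.rev with hw_def
  have hw : Submodule.span K (Set.range w) = ⊤ :=
    tri_span w (fun i => hd i.rev) (fun i j hij => ht i.rev j.rev (by simpa using hij))
  let E : (Fin n → K) ≃ₗ[K] (Fin n → K) := LinearEquiv.funCongrLeft K K Fin.revPerm
  have hcomp : ⇑E ∘ v = w ∘ Fin.rev := by
    funext i j
    simp [E, w, LinearEquiv.funCongrLeft_apply, Fin.rev_rev]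
  have himg : ⇑E '' Set.range v = Set.range w := by
    rw [← Set.range_comp, hcomp, Set.range_comp, Fin.rev_surjective.range_eq, Set.image_univ]
  have hmap : Submodule.map (E : (Fin n → K) →ₗ[K] (Fin n → K))
      (Submodule.span K (Set.range v)) = ⊤ := by
    rw [Submodule.map_span]
    rw [show (⇑(E : (Fin n → K) →ₗ[K] (Fin n → K))) = ⇑E from rfl, himg, hw]
  apply Submodule.map_injective_of_injective (f := (E : (Fin n → K) →ₗ[K] (Fin n → K)))
    E.injective
  rw [hmap, Submodule.map_top, LinearEquiv.range]


/-- `ψ_r(e_p ∧ e_q)` evaluated at the point `(t₀, u₀)`, as a vector in `K^{r-1}`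
(coordinate `k : Fin (r-1)` corresponds to the basis vector `g_{k+1}`). -/
noncomputable def evalPsi {K : Type*} [Field K] (r : ℕ) (t0 u0 : K) (p q : ℕ) :
    Fin (r - 1) → K := fun k =>
  ∑ h ∈ Finset.Ico p q,
    if p + q - 1 - h = (k : ℕ) + 1 then t0 ^ (r - h - 1) * u0 ^ (h - 1) else 0

/-- `ψ_r` is surjective at every point of `P¹`: if `t₀ ≠ 0` the vectors
`ψ_r(e_1∧e_2), ..., ψ_r(e_1∧e_r)` evaluated at `(t₀,u₀)` span `K^{r-1}`, and if `u₀ ≠ 0`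
the vectors `ψ_r(e_1∧e_r), ..., ψ_r(e_{r-1}∧e_r)` evaluated at `(t₀,u₀)` span `K^{r-1}`. -/
theorem stmt7 {K : Type*} [Field K] [IsAlgClosed K] {r : ℕ} (hr : 2 ≤ r) (t0 u0 : K)
    (h0 : ¬(t0 = 0 ∧ u0 = 0)) :
    (t0 ≠ 0 →
      Submodule.span K ((fun q => evalPsi r t0 u0 1 q) '' Set.Icc 2 r) = ⊤) ∧
    (u0 ≠ 0 →
      Submodule.span K ((fun p => evalPsi r t0 u0 p r) '' Set.Icc 1 (r - 1)) = ⊤) := by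
  constructor
  · intro ht0
    set v : Fin (r - 1) → Fin (r - 1) → K := fun k => evalPsi r t0 u0 1 ((k : ℕ) + 2)
      with hv_def
    have hd : ∀ k, v k k ≠ 0 := by
      intro k
      have : v k k = t0 ^ (r - 2) := by
        show (∑ h ∈ Finset.Ico 1 ((k : ℕ) + 2),
          if 1 + ((k : ℕ) + 2) - 1 - h = (k : ℕ) + 1 then t0 ^ (r - h - 1) * u0 ^ (h - 1)
          else 0) = t0 ^ (r - 2)
        rw [Finset.sum_congr rfl (fun h hh => by
          rw [Finset.mem_Ico] at hh
          exact if_congr (by omega) rfl rfl : ∀ h ∈ Finset.Ico 1 ((k : ℕ) + 2),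
            (if 1 + ((k : ℕ) + 2) - 1 - h = (k : ℕ) + 1 then t0 ^ (r - h - 1) * u0 ^ (h - 1)
            else 0) = (if h = 1 then t0 ^ (r - h - 1) * u0 ^ (h - 1) else 0))]
        rw [Finset.sum_ite_eq' (Finset.Ico 1 ((k : ℕ) + 2)) 1
          (fun h => t0 ^ (r - h - 1) * u0 ^ (h - 1))]
        rw [if_pos (by rw [Finset.mem_Ico]; omega)]
        norm_num
        rw [show r - 1 - 1 = r - 2 from by omega]
      rw [this]
      exact pow_ne_zero _ ht0
    have ht : ∀ k j, k < j → v k j = 0 := by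
      intro k j hkj
      have hkj' : (k : ℕ) < (j : ℕ) := hkj
      apply Finset.sum_eq_zero
      intro h hh
      rw [Finset.mem_Ico] at hh
      rw [if_neg (by omega)]
    have hsub : Set.range v ⊆ (fun q => evalPsi r t0 u0 1 q) '' Set.Icc 2 r := by
      rintro _ ⟨k, rfl⟩
      exact ⟨(k : ℕ) + 2, ⟨by omega, by have := k.isLt; omega⟩, rfl⟩
    exact top_unique ((tri_span v hd ht) ▸ Submodule.span_mono hsub)
  · intro hu0
    set v : Fin (r - 1) → Fin (r - 1) → K := fun k => evalPsi r t0 u0 ((k : ℕ) + 1) r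
      with hv_def
    have hd : ∀ k, v k k ≠ 0 := by
      intro k
      have hk := k.isLt
      have : v k k = u0 ^ (r - 2) := by
        show (∑ h ∈ Finset.Ico ((k : ℕ) + 1) r,
          if (k : ℕ) + 1 + r - 1 - h = (k : ℕ) + 1 then t0 ^ (r - h - 1) * u0 ^ (h - 1)
          else 0) = u0 ^ (r - 2)
        rw [Finset.sum_congr rfl (fun h hh => by
          rw [Finset.mem_Ico] at hh
          exact if_congr (by omega) rfl rfl : ∀ h ∈ Finset.Ico ((k : ℕ) + 1) r,
            (if (k : ℕ) + 1 + r - 1 - h = (k : ℕ) + 1 then t0 ^ (r - h - 1) * u0 ^ (h - 1)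
            else 0) = (if h = r - 1 then t0 ^ (r - h - 1) * u0 ^ (h - 1) else 0))]
        rw [Finset.sum_ite_eq' (Finset.Ico ((k : ℕ) + 1) r) (r - 1)
          (fun h => t0 ^ (r - h - 1) * u0 ^ (h - 1))]
        rw [if_pos (by rw [Finset.mem_Ico]; omega)]
        rw [show r - (r - 1) - 1 = 0 from by omega, show r - 1 - 1 = r - 2 from by omega]
        rw [pow_zero, one_mul]
      rw [this]
      exact pow_ne_zero _ hu0
    have ht : ∀ k j, j < k → v k j = 0 := by
      intro k j hkj
      have hkj' : (j : ℕ) < (k : ℕ) := hkj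
      apply Finset.sum_eq_zero
      intro h hh
      rw [Finset.mem_Ico] at hh
      rw [if_neg (by omega)]
    have hsub : Set.range v ⊆ (fun p => evalPsi r t0 u0 p r) '' Set.Icc 1 (r - 1) := by
      rintro _ ⟨k, rfl⟩
      exact ⟨(k : ℕ) + 1, ⟨by omega, by have := k.isLt; omega⟩, rfl⟩
    exact top_unique ((tri_span' v hd ht) ▸ Submodule.span_mono hsub)
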